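/- Let A and Ã be real m×N matrices, 0 < β_min ≤ β_max, and suppose β_min²·I ≼ A Aᵀ ≼ β_max²·I (i.e. the spectrum of A Aᵀ lies in [β_min², β_max²]; in particular A Aᵀ is invertible), and suppose Ã Ãᵀ is invertible. Let α = min(1, β_min) and let j ≥ 1. If ‖Ã − A‖_op ≤ (1/2)·(1/4)·(1 + β_max)^{-2}·α⁴·2^{-j}, then ‖Ãᵀ (Ã Ãᵀ)⁻¹ − Aᵀ (A Aᵀ)⁻¹‖_op ≤ 2^{-j}. -/

import Mathlib

open scoped ENNReal
open Matrix

/-- Operator norm of a real matrix induced by the ℓ² norms. -/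
noncomputable def matOpNorm {k l : ℕ} (M : Matrix (Fin k) (Fin l) ℝ) : ℝ :=
  ‖LinearMap.toContinuousLinearMap (Matrix.toEuclideanLin M)‖

open scoped Matrix.Norms.L2Operator RealInnerProductSpace

lemma matOpNorm_eq {k l : ℕ} (M : Matrix (Fin k) (Fin l) ℝ) : matOpNorm M = ‖M‖ := rfl

lemma conjT_eq {k l : ℕ} (M : Matrix (Fin k) (Fin l) ℝ) : Mᴴ = Mᵀ := by
  ext i j; simp [conjTranspose_apply]

lemma toEL_mul {k l p : ℕ} (M : Matrix (Fin k) (Fin l) ℝ) (N : Matrix (Fin l) (Fin p) ℝ)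
    (v : EuclideanSpace ℝ (Fin p)) :
    toEuclideanLin (M * N) v = toEuclideanLin M (toEuclideanLin N v) := by
  simp [toEuclideanLin_apply, Matrix.mulVec_mulVec]

lemma toEL_one {n : ℕ} (v : EuclideanSpace ℝ (Fin n)) :
    toEuclideanLin (1 : Matrix (Fin n) (Fin n) ℝ) v = v := by
  simp [toEuclideanLin_apply]

lemma inner_toEL {n : ℕ} (S : Matrix (Fin n) (Fin n) ℝ) (x : EuclideanSpace ℝ (Fin n)) :
    ⟪x, toEuclideanLin S x⟫ = (WithLp.equiv 2 _ x) ⬝ᵥ (S *ᵥ (WithLp.equiv 2 _ x)) := by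
  rw [EuclideanSpace.inner_eq_star_dotProduct]
  simp [toEuclideanLin_apply]; exact dotProduct_comm _ _

-- quadratic lower bound from PosSemidef of S - c • 1
lemma quad_lower {n : ℕ} {S : Matrix (Fin n) (Fin n) ℝ} {c : ℝ}
    (h : (S - c • (1 : Matrix (Fin n) (Fin n) ℝ)).PosSemidef)
    (x : EuclideanSpace ℝ (Fin n)) :
    c * ‖x‖ ^ 2 ≤ ⟪x, toEuclideanLin S x⟫ := by
  have h2 := h.dotProduct_mulVec_nonneg (WithLp.equiv 2 _ x)
  simp only [star_trivial, Matrix.sub_mulVec, Matrix.smul_mulVec, Matrix.one_mulVec,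
    dotProduct_sub, dotProduct_smul, smul_eq_mul] at h2
  have hx : (WithLp.equiv 2 _ x) ⬝ᵥ (WithLp.equiv 2 _ x) = ‖x‖ ^ 2 := by
    rw [← real_inner_self_eq_norm_sq, EuclideanSpace.inner_eq_star_dotProduct]; simp
  rw [inner_toEL, ← hx]
  linarith [h2]

lemma quad_upper {n : ℕ} {S : Matrix (Fin n) (Fin n) ℝ} {c : ℝ}
    (h : (c • (1 : Matrix (Fin n) (Fin n) ℝ) - S).PosSemidef)
    (x : EuclideanSpace ℝ (Fin n)) :
    ⟪x, toEuclideanLin S x⟫ ≤ c * ‖x‖ ^ 2 := by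
  have h2 := h.dotProduct_mulVec_nonneg (WithLp.equiv 2 _ x)
  simp only [star_trivial, Matrix.sub_mulVec, Matrix.smul_mulVec, Matrix.one_mulVec,
    dotProduct_sub, dotProduct_smul, smul_eq_mul] at h2
  have hx : (WithLp.equiv 2 _ x) ⬝ᵥ (WithLp.equiv 2 _ x) = ‖x‖ ^ 2 := by
    rw [← real_inner_self_eq_norm_sq, EuclideanSpace.inner_eq_star_dotProduct]; simp
  rw [inner_toEL, ← hx]
  linarith [h2]

lemma le_opNorm_toEL {k l : ℕ} (M : Matrix (Fin k) (Fin l) ℝ) (x : EuclideanSpace ℝ (Fin l)) :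
    ‖toEuclideanLin M x‖ ≤ ‖M‖ * ‖x‖ :=
  ((toEuclideanLin.trans LinearMap.toContinuousLinearMap) M).le_opNorm x

lemma opNorm_le_of_pointwise {k l : ℕ} (M : Matrix (Fin k) (Fin l) ℝ) {c : ℝ} (hc : 0 ≤ c)
    (h : ∀ x : EuclideanSpace ℝ (Fin l), ‖toEuclideanLin M x‖ ≤ c * ‖x‖) : ‖M‖ ≤ c := by
  rw [Matrix.l2_opNorm_def]
  exact ContinuousLinearMap.opNorm_le_bound _ hc h

lemma inner_toEL_symm {n : ℕ} {S : Matrix (Fin n) (Fin n) ℝ} (hS : Sᵀ = S)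
    (x y : EuclideanSpace ℝ (Fin n)) :
    ⟪x, toEuclideanLin S y⟫ = ⟪toEuclideanLin S x, y⟫ := by
  simp only [EuclideanSpace.inner_eq_star_dotProduct, star_trivial,
    ofLp_toEuclideanLin_apply]
  rw [Matrix.dotProduct_mulVec, ← Matrix.mulVec_transpose, hS]

lemma inv_norm_le {n : ℕ} {S : Matrix (Fin n) (Fin n) ℝ} (hdet : IsUnit S.det) {c : ℝ}
    (hc : 0 < c) (h : ∀ x : EuclideanSpace ℝ (Fin n), c * ‖x‖ ^ 2 ≤ ⟪x, toEuclideanLin S x⟫) :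
    ‖S⁻¹‖ ≤ c⁻¹ := by
  apply opNorm_le_of_pointwise _ (by positivity)
  intro y
  set x : EuclideanSpace ℝ (Fin n) := toEuclideanLin S⁻¹ y with hxdef
  have hSx : toEuclideanLin S x = y := by
    rw [hxdef, ← toEL_mul, Matrix.mul_nonsing_inv _ hdet, toEL_one]
  have h1 : c * ‖x‖ ^ 2 ≤ ⟪x, y⟫ := by rw [← hSx] at *; exact h x
  have h2 : ⟪x, y⟫ ≤ ‖x‖ * ‖y‖ := real_inner_le_norm x y
  have hx0 : 0 ≤ ‖x‖ := norm_nonneg x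
  have hy0 : 0 ≤ ‖y‖ := norm_nonneg y
  rcases eq_or_lt_of_le hx0 with h0 | h0
  · rw [← h0]; positivity
  · have h3 : c * ‖x‖ ≤ ‖y‖ := by nlinarith
    rw [show c⁻¹ * ‖y‖ = ‖y‖ / c by ring, le_div_iff₀ hc]
    linarith
  
open scoped MatrixOrder in
lemma psd_sandwich_norm_le {n : ℕ} {S : Matrix (Fin n) (Fin n) ℝ} {c : ℝ} (hc : 0 ≤ c)
    (hS : S.PosSemidef) (h : (c • (1 : Matrix (Fin n) (Fin n) ℝ) - S).PosSemidef) :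
    ‖S‖ ≤ c := by
  set R := CFC.sqrt S with hR
  have hRR : R * R = S := CFC.sqrt_mul_sqrt_self S hS.nonneg
  have hRherm : Rᴴ = R := (CFC.sqrt_nonneg S).posSemidef.1
  have key : (R * (c • (1 : Matrix (Fin n) (Fin n) ℝ) - S) * Rᴴ).PosSemidef :=
    h.mul_mul_conjTranspose_same R
  rw [hRherm] at key
  have keq : R * (c • (1 : Matrix (Fin n) (Fin n) ℝ) - S) * R = c • S - S * S := by
    rw [Matrix.mul_sub, Matrix.sub_mul]
    rw [Matrix.mul_smul, Matrix.mul_one, Matrix.smul_mul, hRR]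
    rw [← hRR]
    noncomm_ring
  rw [keq] at key
  apply opNorm_le_of_pointwise _ hc
  intro x
  have hSsym : Sᵀ = S := by rw [← conjT_eq, hS.1]
  have e1 : ‖toEuclideanLin S x‖ ^ 2 = ⟪x, toEuclideanLin (S * S) x⟫ := by
    rw [← real_inner_self_eq_norm_sq, toEL_mul, inner_toEL_symm hSsym]
    exact real_inner_comm _ _
  have e2 : ⟪x, toEuclideanLin (S * S) x⟫ ≤ c * ⟪x, toEuclideanLin S x⟫ := by
    have hq := quad_lower (c := 0) (by simpa using key) x
    simp only [zero_mul] at hq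
    have : toEuclideanLin (c • S - S * S) x = c • toEuclideanLin S x - toEuclideanLin (S*S) x := by
      simp only [map_sub, _root_.map_smul, LinearMap.sub_apply, LinearMap.smul_apply]
    rw [this] at hq
    rw [inner_sub_right, inner_smul_right] at hq
    linarith
  have e3 : ⟪x, toEuclideanLin S x⟫ ≤ c * ‖x‖ ^ 2 := quad_upper h x
  have e4 : ‖toEuclideanLin S x‖ ^ 2 ≤ c ^ 2 * ‖x‖ ^ 2 := by nlinarith
  nlinarith [norm_nonneg (toEuclideanLin S x), norm_nonneg x, mul_nonneg hc (norm_nonneg x)]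

lemma pseudo_norm_le {m N : ℕ} (A : Matrix (Fin m) (Fin N) ℝ) (hAAT : IsUnit (A * Aᵀ).det)
    {b : ℝ} (hb : 0 < b) (hinv : ‖(A * Aᵀ)⁻¹‖ ≤ (b ^ 2)⁻¹) :
    ‖Aᵀ * (A * Aᵀ)⁻¹‖ ≤ b⁻¹ := by
  set M := Aᵀ * (A * Aᵀ)⁻¹ with hM
  have hsym : (A * Aᵀ)ᵀ = A * Aᵀ := by
    rw [Matrix.transpose_mul, Matrix.transpose_transpose]
  have hMT : Mᴴ * M = (A * Aᵀ)⁻¹ := by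
    rw [conjT_eq, hM, Matrix.transpose_mul, Matrix.transpose_nonsing_inv, hsym,
      Matrix.transpose_transpose]
    rw [Matrix.mul_assoc ((A * Aᵀ)⁻¹) A _, ← Matrix.mul_assoc A Aᵀ ((A * Aᵀ)⁻¹),
      ← Matrix.mul_assoc, Matrix.nonsing_inv_mul _ hAAT, Matrix.one_mul]
  have hC : ‖M‖ * ‖M‖ ≤ (b ^ 2)⁻¹ := by
    rw [← Matrix.l2_opNorm_conjTranspose_mul_self, hMT]; exact hinv
  have hb2 : (b ^ 2)⁻¹ = b⁻¹ * b⁻¹ := by rw [← mul_inv]; ring_nf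
  have h0 : 0 ≤ ‖M‖ := norm_nonneg _
  have hbi : 0 < b⁻¹ := by positivity
  nlinarith [hC, hb2]

set_option maxHeartbeats 1000000 in
/-- a quantitative perturbation bound for the pseudoinverse
`A† = Aᵀ(AAᵀ)⁻¹`: if the spectrum of `AAᵀ` lies in `[β_min², β_max²]`, `B Bᵀ` is
invertible and `‖B - A‖ ≤ (1/2)(1/4)(1+β_max)⁻² α⁴ 2⁻ʲ` with `α = min 1 β_min`,
then `‖Bᵀ(BBᵀ)⁻¹ - Aᵀ(AAᵀ)⁻¹‖ ≤ 2⁻ʲ` (here `B` plays the role of `Ã`). -/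
theorem stmt_11 (m N : ℕ) (A B : Matrix (Fin m) (Fin N) ℝ)
    (βmin βmax : ℝ) (hβmin : 0 < βmin) (hββ : βmin ≤ βmax)
    (hlow : (A * Aᵀ - (βmin ^ 2) • (1 : Matrix (Fin m) (Fin m) ℝ)).PosSemidef)
    (hup : ((βmax ^ 2) • (1 : Matrix (Fin m) (Fin m) ℝ) - A * Aᵀ).PosSemidef)
    (hAAT : IsUnit (A * Aᵀ).det)
    (hBBT : IsUnit (B * Bᵀ).det)
    (α : ℝ) (hα : α = min 1 βmin) (j : ℕ) (hj : 1 ≤ j)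
    (hclose : matOpNorm (B - A) ≤
      (1 / 2) * (1 / 4) * ((1 + βmax) ^ 2)⁻¹ * α ^ 4 * ((2 : ℝ) ^ j)⁻¹) :
    matOpNorm (Bᵀ * (B * Bᵀ)⁻¹ - Aᵀ * (A * Aᵀ)⁻¹) ≤ ((2 : ℝ) ^ j)⁻¹ := by
  rw [matOpNorm_eq] at hclose ⊢
  set t : ℝ := ((2 : ℝ) ^ j)⁻¹ with ht
  have ht0 : 0 < t := by positivity
  have ht2 : t ≤ 1 / 2 := by
    have h2j : (2 : ℝ) ≤ 2 ^ j := by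
      calc (2 : ℝ) = 2 ^ 1 := (pow_one 2).symm
      _ ≤ 2 ^ j := by exact pow_le_pow_right₀ one_le_two hj
    rw [ht, show (1 : ℝ) / 2 = 2⁻¹ by norm_num]
    exact inv_anti₀ (by norm_num) h2j
  have hbmax0 : (0 : ℝ) < βmax := lt_of_lt_of_le hβmin hββ
  have hM1 : (1 : ℝ) ≤ (1 + βmax) ^ 2 := by nlinarith
  have hMne : ((1 + βmax) ^ 2) ≠ 0 := by positivity
  have hMcancel : ((1 + βmax) ^ 2)⁻¹ * (1 + βmax) ^ 2 = 1 := inv_mul_cancel₀ hMne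
  have hMinv0' : (0 : ℝ) < ((1 + βmax) ^ 2)⁻¹ := by positivity
  have hMinv1 : ((1 + βmax) ^ 2)⁻¹ ≤ 1 := by nlinarith
  have hMinv0 : (0 : ℝ) ≤ ((1 + βmax) ^ 2)⁻¹ := by positivity
  have ha0 : 0 < α := by rw [hα]; exact lt_min one_pos hβmin
  have ha1 : α ≤ 1 := by rw [hα]; exact min_le_left _ _
  have ha2 : α ≤ βmin := by rw [hα]; exact min_le_right _ _
  have h2a : α ^ 2 ≤ 1 := by nlinarith
  have h2b : α ^ 2 ≤ βmin ^ 2 := by nlinarith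
  have h3b : α ^ 3 ≤ βmin ^ 3 := pow_le_pow_left₀ ha0.le ha2 3
  have ha4b2 : α ^ 4 ≤ βmin ^ 2 := by
    nlinarith [mul_le_mul h2a h2b (sq_nonneg α) zero_le_one]
  have ha4b3 : α ^ 4 ≤ βmin ^ 3 := by
    nlinarith [mul_le_mul ha1 h3b (by positivity : (0:ℝ) ≤ α ^ 3) zero_le_one]
  have ha41 : α ^ 4 ≤ 1 := by
    nlinarith [mul_le_mul h2a h2a (sq_nonneg α) zero_le_one]
  set ε : ℝ := ‖B - A‖ with hε
  have hε0 : 0 ≤ ε := norm_nonneg _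
  have hεle : ε ≤ (1 / 8) * α ^ 4 * t := by
    have : (1 / 2 : ℝ) * (1 / 4) * ((1 + βmax) ^ 2)⁻¹ * α ^ 4 * t ≤ (1 / 8) * α ^ 4 * t := by
      nlinarith [mul_nonneg (pow_nonneg ha0.le 4) ht0.le]
    linarith [hclose]
  have hε1 : ε ≤ 1 := by nlinarith
  -- transpose norms
  have hTnorm : ∀ (C : Matrix (Fin m) (Fin N) ℝ), ‖Cᵀ‖ = ‖C‖ := fun C => by
    rw [← conjT_eq]; exact Matrix.l2_opNorm_conjTranspose C
  -- norm of A
  have hAAT_psd : (A * Aᵀ).PosSemidef := by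
    rw [← conjT_eq]; exact Matrix.posSemidef_self_mul_conjTranspose A
  have hnormAAT : ‖A * Aᵀ‖ ≤ βmax ^ 2 := psd_sandwich_norm_le (by positivity) hAAT_psd hup
  have hnormA : ‖A‖ ≤ βmax := by
    have h1 : ‖(Aᵀ)ᴴ * Aᵀ‖ = ‖Aᵀ‖ * ‖Aᵀ‖ := Matrix.l2_opNorm_conjTranspose_mul_self Aᵀ
    rw [conjT_eq, Matrix.transpose_transpose, hTnorm] at h1
    nlinarith [norm_nonneg A, hnormAAT, h1]
  have hnormB : ‖B‖ ≤ βmax + ε := by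
    calc ‖B‖ = ‖A + (B - A)‖ := by rw [add_sub_cancel]
    _ ≤ ‖A‖ + ‖B - A‖ := norm_add_le _ _
    _ ≤ βmax + ε := by rw [← hε]; linarith
  -- norm of B Bᵀ − A Aᵀ
  set δ : ℝ := ‖B * Bᵀ - A * Aᵀ‖ with hδ
  have hδ0 : 0 ≤ δ := norm_nonneg _
  have hδle : δ ≤ (1 / 8) * α ^ 4 * t := by
    have hid : B * Bᵀ - A * Aᵀ = B * (B - A)ᵀ + (B - A) * Aᵀ := by
      rw [Matrix.transpose_sub, Matrix.mul_sub, Matrix.sub_mul]; abel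
    have h1 : δ ≤ ‖B‖ * ε + ε * ‖A‖ := by
      rw [hδ, hid]
      calc ‖B * (B - A)ᵀ + (B - A) * Aᵀ‖ ≤ ‖B * (B - A)ᵀ‖ + ‖(B - A) * Aᵀ‖ := norm_add_le _ _
      _ ≤ ‖B‖ * ‖(B - A)ᵀ‖ + ‖B - A‖ * ‖Aᵀ‖ := by
          exact add_le_add (Matrix.l2_opNorm_mul _ _) (Matrix.l2_opNorm_mul _ _)
      _ = ‖B‖ * ε + ε * ‖A‖ := by rw [hTnorm, hTnorm, ← hε]
    have h2 : δ ≤ ε * (1 + βmax) ^ 2 := by nlinarith [norm_nonneg B]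
    have h3 : ε * (1 + βmax) ^ 2 ≤ (1 / 8) * α ^ 4 * t := by
      have h4 := mul_le_mul_of_nonneg_right hclose
        (by positivity : (0:ℝ) ≤ (1 + βmax) ^ 2)
      have heq : 1 / 2 * (1 / 4) * ((1 + βmax) ^ 2)⁻¹ * α ^ 4 * t * (1 + βmax) ^ 2
          = 1 / 8 * α ^ 4 * t := by
        field_simp
        ring
      rw [heq] at h4
      exact h4
    linarith
  have hδhalf : δ ≤ βmin ^ 2 / 2 := by nlinarith
  -- inverse norms
  have hinvA : ‖(A * Aᵀ)⁻¹‖ ≤ (βmin ^ 2)⁻¹ :=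
    inv_norm_le hAAT (by positivity) (quad_lower hlow)
  have hpseudoA : ‖Aᵀ * (A * Aᵀ)⁻¹‖ ≤ βmin⁻¹ := pseudo_norm_le A hAAT hβmin hinvA
  have hquadB : ∀ x : EuclideanSpace ℝ (Fin m),
      (βmin ^ 2 / 2) * ‖x‖ ^ 2 ≤ ⟪x, toEuclideanLin (B * Bᵀ) x⟫ := by
    intro x
    have h1 := quad_lower hlow x
    have hsub : toEuclideanLin (B * Bᵀ - A * Aᵀ) x
        = toEuclideanLin (B * Bᵀ) x - toEuclideanLin (A * Aᵀ) x := by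
      simp [map_sub]
    have h2 : |⟪x, toEuclideanLin (B * Bᵀ - A * Aᵀ) x⟫| ≤ δ * ‖x‖ ^ 2 := by
      calc |⟪x, toEuclideanLin (B * Bᵀ - A * Aᵀ) x⟫|
          ≤ ‖x‖ * ‖toEuclideanLin (B * Bᵀ - A * Aᵀ) x‖ := abs_real_inner_le_norm _ _
      _ ≤ ‖x‖ * (δ * ‖x‖) := by
          exact mul_le_mul_of_nonneg_left (le_opNorm_toEL _ _) (norm_nonneg x)
      _ = δ * ‖x‖ ^ 2 := by ring
    rw [hsub, inner_sub_right] at h2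
    have h3 := neg_le_of_abs_le h2
    have h4 : δ * ‖x‖ ^ 2 ≤ (βmin ^ 2 / 2) * ‖x‖ ^ 2 :=
      mul_le_mul_of_nonneg_right hδhalf (by positivity)
    linarith
  have hinvB : ‖(B * Bᵀ)⁻¹‖ ≤ (βmin ^ 2 / 2)⁻¹ :=
    inv_norm_le hBBT (by positivity) hquadB
  -- key algebraic identity
  have k1 : (A * Aᵀ)⁻¹ * (A * Aᵀ) = 1 := Matrix.nonsing_inv_mul _ hAAT
  have k2 : (B * Bᵀ) * (B * Bᵀ)⁻¹ = 1 := Matrix.mul_nonsing_inv _ hBBT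
  have key : Bᵀ * (B * Bᵀ)⁻¹ - Aᵀ * (A * Aᵀ)⁻¹ =
      (B - A)ᵀ * (B * Bᵀ)⁻¹ + Aᵀ * (A * Aᵀ)⁻¹ * ((A * Aᵀ - B * Bᵀ) * (B * Bᵀ)⁻¹) := by
    have e1 : Aᵀ * (A * Aᵀ)⁻¹ * ((A * Aᵀ) * (B * Bᵀ)⁻¹) = Aᵀ * (B * Bᵀ)⁻¹ := by
      rw [← Matrix.mul_assoc (Aᵀ * (A * Aᵀ)⁻¹), Matrix.mul_assoc Aᵀ, k1, Matrix.mul_one]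
    have e2 : Aᵀ * (A * Aᵀ)⁻¹ * ((B * Bᵀ) * (B * Bᵀ)⁻¹) = Aᵀ * (A * Aᵀ)⁻¹ := by
      rw [k2, Matrix.mul_one]
    rw [Matrix.sub_mul, Matrix.mul_sub, e1, e2, Matrix.transpose_sub, Matrix.sub_mul]
    abel
  -- final norm chain
  have hchain : ‖Bᵀ * (B * Bᵀ)⁻¹ - Aᵀ * (A * Aᵀ)⁻¹‖ ≤
      ε * ‖(B * Bᵀ)⁻¹‖ + βmin⁻¹ * (δ * ‖(B * Bᵀ)⁻¹‖) := by
    rw [key]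
    have hrev : ‖A * Aᵀ - B * Bᵀ‖ = δ := by rw [hδ, norm_sub_rev]
    calc ‖(B - A)ᵀ * (B * Bᵀ)⁻¹ + Aᵀ * (A * Aᵀ)⁻¹ * ((A * Aᵀ - B * Bᵀ) * (B * Bᵀ)⁻¹)‖
        ≤ ‖(B - A)ᵀ * (B * Bᵀ)⁻¹‖ + ‖Aᵀ * (A * Aᵀ)⁻¹ * ((A * Aᵀ - B * Bᵀ) * (B * Bᵀ)⁻¹)‖ :=
          norm_add_le _ _
      _ ≤ ‖(B - A)ᵀ‖ * ‖(B * Bᵀ)⁻¹‖ +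
            ‖Aᵀ * (A * Aᵀ)⁻¹‖ * (‖A * Aᵀ - B * Bᵀ‖ * ‖(B * Bᵀ)⁻¹‖) := by
          refine add_le_add (Matrix.l2_opNorm_mul _ _) ?_
          refine le_trans (Matrix.l2_opNorm_mul _ _) ?_
          exact mul_le_mul_of_nonneg_left (Matrix.l2_opNorm_mul _ _) (norm_nonneg _)
      _ ≤ ε * ‖(B * Bᵀ)⁻¹‖ + βmin⁻¹ * (δ * ‖(B * Bᵀ)⁻¹‖) := by
          rw [hTnorm, ← hε, hrev]
          gcongr
  have hnB0 : 0 ≤ ‖(B * Bᵀ)⁻¹‖ := norm_nonneg _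
  have termA : ε * ‖(B * Bᵀ)⁻¹‖ ≤ t / 4 := by
    have h1 : ε * ‖(B * Bᵀ)⁻¹‖ ≤ ε * (βmin ^ 2 / 2)⁻¹ :=
      mul_le_mul_of_nonneg_left hinvB hε0
    have h2 : ε * (βmin ^ 2 / 2)⁻¹ ≤ t / 4 := by
      rw [mul_inv_le_iff₀ (by positivity)]
      nlinarith
    linarith
  have termB : βmin⁻¹ * (δ * ‖(B * Bᵀ)⁻¹‖) ≤ t / 4 := by
    have h1 : βmin⁻¹ * (δ * ‖(B * Bᵀ)⁻¹‖) ≤ βmin⁻¹ * (δ * (βmin ^ 2 / 2)⁻¹) := by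
      gcongr
    have h2 : βmin⁻¹ * (δ * (βmin ^ 2 / 2)⁻¹) = δ * (βmin ^ 3 / 2)⁻¹ := by
      rw [show (βmin ^ 3 / 2 : ℝ) = βmin * (βmin ^ 2 / 2) by ring, mul_inv]
      ring
    have h3 : δ * (βmin ^ 3 / 2)⁻¹ ≤ t / 4 := by
      rw [mul_inv_le_iff₀ (by positivity)]
      nlinarith
    linarith [h1, h2.le, h2.ge]
  linarith [hchain, termA, termB]
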